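/- Let n be a positive integer and let w, v : Fin n → ℤ be families of nonzero integers such that the number of indices j with w j < 0 differs from the number of indices j with v j < 0. Then it is impossible that both of the following identities hold in RatFunc ℚ: (i) (∏_{j}(1 − X^{w j}))⁻¹ + (∏_{j}(1 − X^{v j}))⁻¹ = 0, and (ii) (∑_{j} X^{w j}) · (∏_{j}(1 − X^{w j}))⁻¹ + (∑_{j} X^{v j}) · (∏_{j}(1 − X^{v j}))⁻¹ = 0. -/
import Mathlib

open Polynomial

private lemma X_zpow_ne_one (a : ℤ) (ha : a ≠ 0) : (RatFunc.X : RatFunc ℚ) ^ a ≠ 1 := by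
  have key : ∀ m : ℕ, m ≠ 0 → (RatFunc.X : RatFunc ℚ) ^ (m : ℕ) ≠ 1 := by
    intro m hm h
    have h2 : (algebraMap ℚ[X] (RatFunc ℚ)) (Polynomial.X ^ m) =
        (algebraMap ℚ[X] (RatFunc ℚ)) 1 := by
      simpa [map_pow, RatFunc.algebraMap_X] using h
    have h3 : (Polynomial.X : ℚ[X]) ^ m = 1 := RatFunc.algebraMap_injective ℚ h2
    have := congrArg Polynomial.natDegree h3
    simp [Polynomial.natDegree_X_pow] at this
    exact hm this
  rcases lt_or_gt_of_ne ha with hlt | hgt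
  · intro h
    have hX : (RatFunc.X : RatFunc ℚ) ^ (-a) = 1 := by
      rw [zpow_neg, h, inv_one]
    have : (RatFunc.X : RatFunc ℚ) ^ ((-a).toNat : ℕ) = 1 := by
      rw [← zpow_natCast, Int.toNat_of_nonneg (by omega)]; exact hX
    exact key _ (by omega) this
  · intro h
    have : (RatFunc.X : RatFunc ℚ) ^ (a.toNat : ℕ) = 1 := by
      rw [← zpow_natCast, Int.toNat_of_nonneg (by omega)]; exact h
    exact key _ (by omega) this

private lemma count_neg_coeff (n M : ℕ) (u : Fin n → ℤ) (hu : ∀ j, (u j).natAbs < M) :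
    (∑ m ∈ Finset.range M, (∑ j, (Polynomial.X : ℚ[X]) ^ (M + u j).toNat).coeff m)
      = ((Finset.univ.filter (fun j => u j < 0)).card : ℚ) := by
  simp only [Polynomial.finset_sum_coeff, Polynomial.coeff_X_pow]
  rw [Finset.sum_comm]
  have : ∀ j : Fin n, (∑ m ∈ Finset.range M, if m = (M + u j).toNat then (1:ℚ) else 0)
      = if u j < 0 then 1 else 0 := by
    intro j
    rw [Finset.sum_ite_eq' (Finset.range M) ((M + u j).toNat) (fun _ => (1:ℚ))]
    have hj := hu j
    by_cases hneg : u j < 0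
    · rw [if_pos hneg, if_pos]; simp only [Finset.mem_range]; omega
    · rw [if_neg hneg, if_neg]; simp only [Finset.mem_range]; omega
  rw [Finset.sum_congr rfl (fun j _ => this j), Finset.sum_boole]

/-- If two families of nonzero integer weights have different numbers of
negative members, then the two rational-function identities (N⁰ = 0 and
N¹ = 0 from Li's equivariant index theorem) cannot both hold. -/
theorem stmt_1 (n : ℕ) (hn : 0 < n) (w v : Fin n → ℤ)
    (hw : ∀ j, w j ≠ 0) (hv : ∀ j, v j ≠ 0)
    (hneg : (Finset.univ.filter (fun j => w j < 0)).card ≠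
            (Finset.univ.filter (fun j => v j < 0)).card) :
    ¬ ((∏ j, (1 - (RatFunc.X : RatFunc ℚ) ^ (w j)))⁻¹ +
         (∏ j, (1 - (RatFunc.X : RatFunc ℚ) ^ (v j)))⁻¹ = 0 ∧
       (∑ j, (RatFunc.X : RatFunc ℚ) ^ (w j)) *
           (∏ j, (1 - (RatFunc.X : RatFunc ℚ) ^ (w j)))⁻¹ +
         (∑ j, (RatFunc.X : RatFunc ℚ) ^ (v j)) *
           (∏ j, (1 - (RatFunc.X : RatFunc ℚ) ^ (v j)))⁻¹ = 0) := by
  rintro ⟨h1, h2⟩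
  set Pw := ∏ j, (1 - (RatFunc.X : RatFunc ℚ) ^ (w j)) with hPw
  set Pv := ∏ j, (1 - (RatFunc.X : RatFunc ℚ) ^ (v j)) with hPv
  set Sw := ∑ j, (RatFunc.X : RatFunc ℚ) ^ (w j) with hSw
  set Sv := ∑ j, (RatFunc.X : RatFunc ℚ) ^ (v j) with hSv
  have hPwne : Pw ≠ 0 := by
    apply Finset.prod_ne_zero_iff.mpr
    intro j _
    intro h
    exact X_zpow_ne_one (w j) (hw j) (by linear_combination -h)
  have hPvne : Pv ≠ 0 := by
    apply Finset.prod_ne_zero_iff.mpr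
    intro j _
    intro h
    exact X_zpow_ne_one (v j) (hv j) (by linear_combination -h)
  -- derive Sw = Sv
  have hinv : Pv⁻¹ = -Pw⁻¹ := by linear_combination h1
  have hSeq : Sw = Sv := by
    have h2' : Sw * Pw⁻¹ + Sv * (-Pw⁻¹) = 0 := by rw [← hinv]; exact h2
    have : (Sw - Sv) * Pw⁻¹ = 0 := by ring_nf; ring_nf at h2'; linear_combination h2'
    rcases mul_eq_zero.mp this with h | h
    · exact sub_eq_zero.mp h
    · exact absurd h (inv_ne_zero hPwne)
  -- now multiply by X^M
  set M : ℕ := 1 + ∑ j, (w j).natAbs + ∑ j, (v j).natAbs with hM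
  have hXne : (RatFunc.X : RatFunc ℚ) ≠ 0 := RatFunc.X_ne_zero
  have hbw : ∀ j, (w j).natAbs < M := by
    intro j
    have h' : (w j).natAbs ≤ ∑ i, (w i).natAbs := by
      simpa using Finset.single_le_sum (f := fun i => (w i).natAbs)
        (fun i _ => Nat.zero_le _) (Finset.mem_univ j)
    omega
  have hbv : ∀ j, (v j).natAbs < M := by
    intro j
    have h' : (v j).natAbs ≤ ∑ i, (v i).natAbs := by
      simpa using Finset.single_le_sum (f := fun i => (v i).natAbs)
        (fun i _ => Nat.zero_le _) (Finset.mem_univ j)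
    omega
  have hmul : ∀ (u : Fin n → ℤ), (∀ j, (u j).natAbs < M) →
      (RatFunc.X : RatFunc ℚ) ^ (M : ℤ) * (∑ j, (RatFunc.X : RatFunc ℚ) ^ (u j))
        = algebraMap ℚ[X] (RatFunc ℚ) (∑ j, (Polynomial.X : ℚ[X]) ^ (M + u j).toNat) := by
    intro u hu
    rw [Finset.mul_sum, map_sum]
    refine Finset.sum_congr rfl (fun j _ => ?_)
    rw [map_pow, RatFunc.algebraMap_X, ← zpow_natCast RatFunc.X ((M + u j).toNat),
      Int.toNat_of_nonneg (by have := hu j; omega), ← zpow_add₀ hXne]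
  have hpq : algebraMap ℚ[X] (RatFunc ℚ) (∑ j, (Polynomial.X : ℚ[X]) ^ (M + w j).toNat)
      = algebraMap ℚ[X] (RatFunc ℚ) (∑ j, (Polynomial.X : ℚ[X]) ^ (M + v j).toNat) := by
    rw [← hmul w hbw, ← hmul v hbv, ← hSw, ← hSv, hSeq]
  have hpq' := RatFunc.algebraMap_injective ℚ hpq
  have := count_neg_coeff n M w hbw
  rw [hpq', count_neg_coeff n M v hbv] at this
  exact hneg (Nat.cast_injective this.symm)
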